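/- arXiv:2205.11176 — 2 statements merged into one kernel-verified Lean document; each statement's English description precedes it below -/
import Mathlib

section
/- Let L₁ and L₂ be principal 𝕋-bundles and let T : C₀^𝕋(L₁) → C₀^𝕋(L₂) be a (not necessarily continuous) linear orthogonality preserving map that is additionally injective. Then the set L₁ ∩ ⋃_{s ∈ L₂} supp(δ_s∘T) is dense in L₁. -/
open scoped ZeroAtInfty

noncomputable section

/-- A principal `𝕋`-bundle: a `𝕋`-symmetric subset `L` of an ambient complex topological
vector space not containing `0` such that `L ∪ {0}` is compact. -/
structure TBundle (E : Type*) [AddCommGroup E] [Module ℂ E] [TopologicalSpace E] where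
  carrier : Set E
  smul_mem : ∀ z : ℂ, ‖z‖ = 1 → ∀ t ∈ carrier, z • t ∈ carrier
  zero_not_mem : (0 : E) ∉ carrier
  isCompact_union : IsCompact (carrier ∪ {0})

variable {E F : Type*} [AddCommGroup E] [Module ℂ E] [TopologicalSpace E]
  [AddCommGroup F] [Module ℂ F] [TopologicalSpace F]

/-- `L̂ = L ∪ {0}`. -/
def TBundle.hat (L : TBundle E) : Set E := L.carrier ∪ {0}

/-- A subset `S` is `𝕋`-symmetric if `𝕋S = S`. -/
def TSymm (S : Set E) : Prop := ∀ z : ℂ, ‖z‖ = 1 → ∀ x ∈ S, z • x ∈ S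

/-- Rotation of a point of `L` by a unimodular scalar. -/
def TBundle.sm (L : TBundle E) (z : ℂ) (hz : ‖z‖ = 1) (t : L.carrier) : L.carrier :=
  ⟨z • (t : E), L.smul_mem z hz t t.2⟩

theorem TBundle.hat_smul_mem (L : TBundle E) (z : ℂ) (hz : ‖z‖ = 1) {x : E}
    (hx : x ∈ L.hat) : z • x ∈ L.hat := by
  rcases hx with hx | hx
  · exact Or.inl (L.smul_mem z hz x hx)
  · simp only [Set.mem_singleton_iff] at hx
    subst hx
    right; simp

/-- Rotation of a point of `L̂` by a unimodular scalar. -/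
def TBundle.hsm (L : TBundle E) (z : ℂ) (hz : ‖z‖ = 1) (t : L.hat) : L.hat :=
  ⟨z • (t : E), L.hat_smul_mem z hz t.2⟩

/-- The commutative JB*-triple `C₀^𝕋(L)` of `𝕋`-equivariant elements of `C₀(L, ℂ)`,
as a (closed) submodule of `C₀(L, ℂ)`. -/
def TBundle.C0T (L : TBundle E) : Submodule ℂ C₀(↥L.carrier, ℂ) where
  carrier := {a | ∀ (z : ℂ) (hz : ‖z‖ = 1) (t : L.carrier), a (L.sm z hz t) = z * a t}
  add_mem' := by
    intro a b ha hb z hz t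
    simp [ha z hz t, hb z hz t, mul_add]
  zero_mem' := by intro z hz t; simp
  smul_mem' := by
    intro c a ha z hz t
    simp [ha z hz t]
    ring

/-- `T` preserves orthogonality: functions with zero pointwise product are mapped to
functions with zero pointwise product. -/
def OrthogonalityPreserving (L₁ : TBundle E) (L₂ : TBundle F)
    (T : L₁.C0T →ₗ[ℂ] L₂.C0T) : Prop :=
  ∀ a b : L₁.C0T, (∀ t : L₁.carrier, a.1 t * b.1 t = 0) →
    ∀ s : L₂.carrier, (T a).1 s * (T b).1 s = 0

/-- The support of the functional `δ_s ∘ T`: all `t ∈ L̂₁` such that every `𝕋`-symmetric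
relatively open neighbourhood `U` of `t` in `L̂₁` contains the cozero set of some
`a ∈ C₀^𝕋(L₁)` with `T(a)(s) ≠ 0`. -/
def suppDelta {L₁ : TBundle E} {L₂ : TBundle F} (T : L₁.C0T →ₗ[ℂ] L₂.C0T)
    (s : L₂.carrier) : Set E :=
  {t | t ∈ L₁.hat ∧ ∀ U : Set E, t ∈ U → TSymm U →
      (∃ V : Set E, IsOpen V ∧ U = V ∩ L₁.hat) →
      ∃ a : L₁.C0T, (∀ x : L₁.carrier, (x : E) ∉ U → a.1 x = 0) ∧ (T a).1 s ≠ 0}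

/-- The set `L₂^z` of points where `δ_s ∘ T` vanishes. -/
def Lzero {L₁ : TBundle E} {L₂ : TBundle F} (T : L₁.C0T →ₗ[ℂ] L₂.C0T) :
    Set L₂.carrier :=
  {s | ∀ a : L₁.C0T, (T a).1 s = 0}

/-- The set `L₂^d` of points where `δ_s ∘ T` is discontinuous (w.r.t. the sup norm). -/
def Ldisc {L₁ : TBundle E} {L₂ : TBundle F} (T : L₁.C0T →ₗ[ℂ] L₂.C0T) :
    Set L₂.carrier :=
  {s | ¬ Continuous fun a : L₁.C0T => (T a).1 s}

/-- The set `L₂^{nz}` of points where `δ_s ∘ T` is nonzero. -/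
def Lnz {L₁ : TBundle E} {L₂ : TBundle F} (T : L₁.C0T →ₗ[ℂ] L₂.C0T) :
    Set L₂.carrier :=
  {s | ∃ a : L₁.C0T, (T a).1 s ≠ 0}

/-- The set `L₂^c` of points where `δ_s ∘ T` is nonzero and norm-continuous. -/
def Lcont {L₁ : TBundle E} {L₂ : TBundle F} (T : L₁.C0T →ₗ[ℂ] L₂.C0T) :
    Set L₂.carrier :=
  {s | (∃ a : L₁.C0T, (T a).1 s ≠ 0) ∧ Continuous fun a : L₁.C0T => (T a).1 s}

/-- The `𝕋`-orbit of a point. -/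
def Torbit (t : E) : Set E := {x | ∃ z : ℂ, ‖z‖ = 1 ∧ x = z • t}

/-- The equivalence relation on `L̂` identifying points of the same `𝕋`-orbit. -/
def TBundle.orbitSetoid (L : TBundle E) : Setoid ↥L.hat where
  r t₁ t₂ := ∃ z : ℂ, ‖z‖ = 1 ∧ (t₂ : E) = z • (t₁ : E)
  iseqv := by
    constructor
    · intro t; exact ⟨1, by simp, by simp⟩
    · rintro t₁ t₂ ⟨z, hz, h⟩
      have hz0 : z ≠ 0 := by intro h0; rw [h0] at hz; simp at hz
      refine ⟨z⁻¹, by simp [hz], ?_⟩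
      rw [h, smul_smul, inv_mul_cancel₀ hz0, one_smul]
    · rintro t₁ t₂ t₃ ⟨z, hz, h⟩ ⟨w, hw, h'⟩
      exact ⟨w * z, by simp [hz, hw], by rw [h', h, smul_smul]⟩

/-- The cozero set of an element of `C₀^𝕋(L)`, as a subset of the ambient space. -/
def coz {L : TBundle E} (a : L.C0T) : Set E := (↑) '' {t : L.carrier | a.1 t ≠ 0}

section AuxLemmas

variable (L : TBundle E)

lemma TBundle.isCompact_hat : IsCompact L.hat := L.isCompact_union

lemma TBundle.compactSpace_hat : CompactSpace ↥L.hat :=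
  isCompact_iff_compactSpace.mp L.isCompact_hat

lemma TBundle.hsm_one (h : ‖(1 : ℂ)‖ = 1) (x : ↥L.hat) : L.hsm 1 h x = x :=
  Subtype.ext (one_smul ℂ (x : E))

lemma TBundle.hsm_hsm (z w : ℂ) (hz : ‖z‖ = 1) (hw : ‖w‖ = 1) (x : ↥L.hat)
    (hzw : ‖z * w‖ = 1) :
    L.hsm z hz (L.hsm w hw x) = L.hsm (z * w) hzw x :=
  Subtype.ext (smul_smul z w (x : E))

/-- Invariantization of a `[0,1]`-valued continuous function on `L̂` by taking the
supremum over the circle orbit. -/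
lemma TBundle.exists_invariant [ContinuousSMul ℂ E] (g : C(↥L.hat, ℝ)) (hg01 : ∀ x, g x ∈ Set.Icc (0:ℝ) 1) :
    ∃ G : ↥L.hat → ℝ, Continuous G ∧
      (∀ (z : ℂ) (hz : ‖z‖ = 1) (x : ↥L.hat), G (L.hsm z hz x) = G x) ∧
      (∀ x, g x ≤ G x) ∧ (∀ x, 0 ≤ G x) ∧
      (∀ x, G x ≠ 0 → ∃ (z : ℂ) (hz : ‖z‖ = 1), g (L.hsm z hz x) ≠ 0) := by
  haveI : CompactSpace ↥(Metric.sphere (0:ℂ) 1) :=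
    isCompact_iff_compactSpace.mp (isCompact_sphere (0:ℂ) 1)
  have memnorm : ∀ z : ↥(Metric.sphere (0:ℂ) 1), ‖(z : ℂ)‖ = 1 := fun z =>
    mem_sphere_zero_iff_norm.mp z.2
  set f : ↥L.hat → ↥(Metric.sphere (0:ℂ) 1) → ℝ :=
    fun x z => g (L.hsm z.1 (memnorm z) x) with hf_def
  have hf : Continuous ↿f := by
    apply g.continuous.comp
    exact Continuous.subtype_mk
      ((continuous_subtype_val.comp continuous_snd).smul
        (continuous_subtype_val.comp continuous_fst)) _
  set G : ↥L.hat → ℝ := fun x => sSup (f x '' Set.univ) with hG_def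
  have hmem1 : (1:ℂ) ∈ Metric.sphere (0:ℂ) 1 := by simp
  set one : ↥(Metric.sphere (0:ℂ) 1) := ⟨1, hmem1⟩ with hone_def
  have hfx : ∀ x, Continuous (f x) := fun x => hf.comp (Continuous.prodMk_right x)
  have hbdd : ∀ x, BddAbove (f x '' Set.univ) := fun x =>
    (isCompact_univ.image (hfx x)).bddAbove
  have hne : ∀ x, (f x '' Set.univ).Nonempty := fun x => ⟨f x one, ⟨one, trivial, rfl⟩⟩
  have hle : ∀ x, g x ≤ G x := by
    intro x
    have h1 : f x one = g x := by
      have hx1 : L.hsm one.1 (memnorm one) x = x := Subtype.ext (one_smul ℂ (x:E))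
      show g (L.hsm one.1 (memnorm one) x) = g x
      rw [hx1]
    calc g x = f x one := h1.symm
    _ ≤ G x := le_csSup (hbdd x) ⟨one, trivial, rfl⟩
  refine ⟨G, isCompact_univ.continuous_sSup hf, ?_, hle, ?_, ?_⟩
  · intro z hz x
    have himg : f (L.hsm z hz x) '' Set.univ = f x '' Set.univ := by
      ext y
      simp only [Set.image_univ, Set.mem_range]
      constructor
      · rintro ⟨w, rfl⟩
        refine ⟨⟨w.1 * z, by simp [mem_sphere_zero_iff_norm, memnorm w, hz]⟩, ?_⟩
        show g _ = g _
        rw [L.hsm_hsm w.1 z (memnorm w) hz x (by rw [norm_mul, memnorm w, hz, mul_one])]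
      · rintro ⟨w, rfl⟩
        have hzne : z ≠ 0 := by intro h; rw [h] at hz; simp at hz
        refine ⟨⟨w.1 * z⁻¹, by simp [mem_sphere_zero_iff_norm, norm_mul, memnorm w, hz]⟩, ?_⟩
        show g _ = g _
        rw [L.hsm_hsm (w.1 * z⁻¹) z (by rw [norm_mul, memnorm w, norm_inv, hz]; norm_num) hz x
          (by rw [norm_mul, norm_mul, memnorm w, norm_inv, hz]; norm_num)]
        congr 1
        apply Subtype.ext
        show (w.1 * z⁻¹ * z) • (x : E) = w.1 • (x : E)
        rw [mul_assoc, inv_mul_cancel₀ hzne, mul_one]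
    show sSup _ = sSup _
    rw [himg]
  · intro x
    exact le_trans (hg01 x).1 (hle x)
  · intro x hGx
    by_contra hcon
    push_neg at hcon
    have himg : f x '' Set.univ = {0} := by
      apply Set.Subset.antisymm
      · rintro y ⟨w, -, rfl⟩
        exact hcon w.1 (memnorm w)
      · rintro y rfl
        exact ⟨one, trivial, hcon one.1 (memnorm one)⟩
    apply hGx
    show sSup _ = 0
    rw [himg, csSup_singleton]

/-- Restriction of an equivariant continuous function on `L̂` vanishing at `0`
to an element of `C₀^𝕋(L)`. -/
lemma TBundle.exists_C0T [T2Space E] (ψ : ↥L.hat → ℂ) (hc : Continuous ψ)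
    (h0 : ∀ x : ↥L.hat, (x : E) = 0 → ψ x = 0)
    (heq : ∀ (z : ℂ) (hz : ‖z‖ = 1) (x : ↥L.hat), ψ (L.hsm z hz x) = z * ψ x) :
    ∃ a : L.C0T, ∀ t : L.carrier, (a : C₀(↥L.carrier, ℂ)) t = ψ ⟨↑t, Or.inl t.2⟩ := by
  haveI : CompactSpace ↥L.hat := L.compactSpace_hat
  set inc : ↥L.carrier → ↥L.hat := fun t => ⟨↑t, Or.inl t.2⟩ with hinc_def
  have hinc : Continuous inc := Continuous.subtype_mk continuous_subtype_val _
  have hcont : Continuous (ψ ∘ inc) := hc.comp hinc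
  have hinfty : Filter.Tendsto (ψ ∘ inc) (Filter.cocompact ↥L.carrier) (nhds 0) := by
    rw [Metric.tendsto_nhds]
    intro ε hε
    rw [Filter.eventually_iff, Filter.mem_cocompact]
    set C : Set ↥L.hat := {x | ε ≤ ‖ψ x‖} with hC_def
    have hCclosed : IsClosed C := isClosed_le continuous_const hc.norm
    refine ⟨{t : ↥L.carrier | ε ≤ ‖(ψ ∘ inc) t‖}, ?_, ?_⟩
    · rw [(Topology.IsEmbedding.subtypeVal).isCompact_iff]
      have himg : Subtype.val '' {t : ↥L.carrier | ε ≤ ‖(ψ ∘ inc) t‖} = Subtype.val '' C := by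
        ext y
        constructor
        · rintro ⟨t, ht, rfl⟩
          exact ⟨inc t, ht, rfl⟩
        · rintro ⟨x, hx, rfl⟩
          have hx' : ε ≤ ‖ψ x‖ := hx
          have hxne : (x : E) ≠ 0 := by
            intro h
            rw [h0 x h] at hx'
            simp at hx'
            linarith
          have hxc : (x : E) ∈ L.carrier := x.2.resolve_right hxne
          refine ⟨⟨x.1, hxc⟩, ?_, rfl⟩
          show ε ≤ ‖ψ (inc ⟨x.1, hxc⟩)‖
          have : inc ⟨x.1, hxc⟩ = x := Subtype.ext rfl
          rw [this]; exact hx'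
      rw [himg]
      exact (hCclosed.isCompact).image continuous_subtype_val
    · intro t ht
      simp only [Set.mem_compl_iff, Set.mem_setOf_eq, not_le] at ht
      simp only [Set.mem_setOf_eq, dist_zero_right]
      exact ht
  refine ⟨⟨⟨⟨ψ ∘ inc, hcont⟩, hinfty⟩, ?_⟩, fun t => rfl⟩
  intro z hz t
  show ψ (inc (L.sm z hz t)) = z * ψ (inc t)
  have : inc (L.sm z hz t) = L.hsm z hz (inc t) := Subtype.ext rfl
  rw [this, heq]

lemma suppDelta_of_smul {L₁ : TBundle E} {L₂ : TBundle F} (T : L₁.C0T →ₗ[ℂ] L₂.C0T)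
    (s : L₂.carrier) {z : ℂ} (hz : ‖z‖ = 1) {x : E} (hx : x ∈ L₁.hat)
    (h : z • x ∈ suppDelta T s) : x ∈ suppDelta T s :=
  ⟨hx, fun U hU hsymm hop => h.2 U (hsymm z hz x hU) hsymm hop⟩

end AuxLemmas
section MainStatements

variable [IsTopologicalAddGroup E] [ContinuousSMul ℂ E] [T2Space E]
  [Module ℝ E] [IsScalarTower ℝ ℂ E] [LocallyConvexSpace ℝ E]
  [IsTopologicalAddGroup F] [ContinuousSMul ℂ F] [T2Space F]
  [Module ℝ F] [IsScalarTower ℝ ℂ F] [LocallyConvexSpace ℝ F]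

/-- For an injective linear orthogonality preserving map
`T : C₀^𝕋(L₁) → C₀^𝕋(L₂)`, the set `L₁ ∩ ⋃_{s ∈ L₂} supp(δ_s ∘ T)` is dense in `L₁`. -/
theorem suppDelta_union_dense (L₁ : TBundle E) (L₂ : TBundle F)
    (T : L₁.C0T →ₗ[ℂ] L₂.C0T) (hT : OrthogonalityPreserving L₁ L₂ T)
    (hinj : Function.Injective T) :
    Dense {t : L₁.carrier | ∃ s : L₂.carrier, (t : E) ∈ suppDelta T s} := by
  classical
  haveI : CompactSpace ↥L₁.hat := L₁.compactSpace_hat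
  haveI : ContinuousSMul ℝ E := by
    constructor
    have h : (fun p : ℝ × E => p.1 • p.2) = fun p : ℝ × E => ((p.1 : ℂ) • p.2) := by
      funext p
      rw [← algebraMap_smul ℂ p.1 p.2, Complex.coe_algebraMap]
    rw [h]
    exact (Complex.continuous_ofReal.comp continuous_fst).smul continuous_snd
  by_contra hdense
  rw [dense_iff_inter_open] at hdense
  push_neg at hdense
  obtain ⟨O, hOopen, hOne, hO⟩ := hdense
  obtain ⟨Vr, hVropen, hVeq⟩ := isOpen_induced_iff.mp hOopen
  obtain ⟨t₀, ht₀O⟩ := hOne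
  have ht₀V : (t₀ : E) ∈ Vr := by rw [← hVeq] at ht₀O; exact ht₀O
  have hdisj : ∀ t : L₁.carrier, (t : E) ∈ Vr → ∀ s : L₂.carrier, (t : E) ∉ suppDelta T s := by
    intro t ht s hsupp
    have hmem : t ∈ O ∩ {t : L₁.carrier | ∃ s, (t : E) ∈ suppDelta T s} := by
      refine ⟨?_, ⟨s, hsupp⟩⟩
      rw [← hVeq]; exact ht
    rw [hO] at hmem; exact hmem
  have ht₀ne : (t₀ : E) ≠ 0 := by
    intro h; exact L₁.zero_not_mem (h ▸ t₀.2)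
  -- shrink to an open set with closure inside `Vr \ {0}`
  have hV₁open : IsOpen (Vr ∩ {(0 : E)}ᶜ) := hVropen.inter isClosed_singleton.isOpen_compl
  obtain ⟨Cn, hCn_nhds, hCnclosed, hCnsub⟩ :=
    exists_mem_nhds_isClosed_subset (hV₁open.mem_nhds ⟨ht₀V, ht₀ne⟩)
  set W : Set E := interior Cn with hW_def
  have hWopen : IsOpen W := isOpen_interior
  have ht₀W : (t₀ : E) ∈ W := mem_interior_iff_mem_nhds.mpr hCn_nhds
  have hclW : closure W ⊆ Vr ∩ {(0 : E)}ᶜ :=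
    (closure_minimal interior_subset hCnclosed).trans hCnsub
  -- a continuous complex-homogeneous functional not vanishing at t₀
  obtain ⟨fr, hfr⟩ := SeparatingDual.exists_ne_zero (R := ℝ) ht₀ne
  set ℓ : E → ℂ := fun x => (fr x : ℂ) - Complex.I * (fr (Complex.I • x) : ℂ) with hl_def
  have hlcont : Continuous ℓ := by
    apply Continuous.sub
    · exact Complex.continuous_ofReal.comp fr.continuous
    · exact continuous_const.mul (Complex.continuous_ofReal.comp
        (fr.continuous.comp (continuous_const.smul continuous_id)))
  have hlzero : ℓ 0 = 0 := by simp [hl_def]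
  have hsr : ∀ (r : ℝ) (x : E), (r : ℂ) • x = r • x := fun r x => by
    rw [← algebraMap_smul ℂ r x, Complex.coe_algebraMap]
  have hlsmul : ∀ (z : ℂ) (x : E), ℓ (z • x) = z * ℓ x := by
    intro z x
    have hzx : z • x = z.re • x + z.im • (Complex.I • x) := by
      conv_lhs => rw [← Complex.re_add_im z]
      rw [add_smul, mul_smul, hsr, hsr]
    have hIzx : Complex.I • (z • x) = (-z.im) • x + z.re • (Complex.I • x) := by
      rw [smul_smul]
      have h2 : Complex.I * z = ((-z.im : ℝ) : ℂ) + (z.re : ℝ) * Complex.I := by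
        apply Complex.ext <;> simp [mul_comm]
      rw [h2, add_smul, mul_smul, hsr, hsr]
    show (fr (z • x) : ℂ) - Complex.I * (fr (Complex.I • (z • x)) : ℂ)
      = z * ((fr x : ℂ) - Complex.I * (fr (Complex.I • x) : ℂ))
    rw [hIzx, hzx]
    rw [map_add fr, map_add fr, map_smul fr z.re x, map_smul fr z.im (Complex.I • x),
      map_smul fr (-z.im) x, map_smul fr z.re (Complex.I • x)]
    simp only [smul_eq_mul]
    apply Complex.ext <;> simp <;> ring
  have hlt₀ : ℓ (t₀ : E) ≠ 0 := by
    intro h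
    apply hfr
    have h2 := congrArg Complex.re h
    simpa [hl_def] using h2
  -- the symmetrized open set TW
  set TW : Set E := ⋃ z : ↥(Metric.sphere (0:ℂ) 1), (fun x : E => (z : ℂ) • x) ⁻¹' W with hTW_def
  have hTWopen : IsOpen TW :=
    isOpen_iUnion fun z => hWopen.preimage (continuous_const.smul continuous_id)
  have hTWmem : ∀ x : E, x ∈ TW ↔ ∃ z : ℂ, ‖z‖ = 1 ∧ z • x ∈ W := by
    intro x
    simp only [hTW_def, Set.mem_iUnion, Set.mem_preimage]
    constructor
    · rintro ⟨z, hz⟩; exact ⟨z.1, mem_sphere_zero_iff_norm.mp z.2, hz⟩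
    · rintro ⟨z, hz, hm⟩; exact ⟨⟨z, mem_sphere_zero_iff_norm.mpr hz⟩, hm⟩
  have hTWsymm : ∀ (w : ℂ), ‖w‖ = 1 → ∀ x ∈ TW, w • x ∈ TW := by
    intro w hw x hx
    rcases (hTWmem x).mp hx with ⟨z, hz, hm⟩
    have hwne : w ≠ 0 := by intro h; rw [h] at hw; simp at hw
    refine (hTWmem _).mpr ⟨z * w⁻¹, by rw [norm_mul, hz, norm_inv, hw]; norm_num, ?_⟩
    rw [smul_smul, mul_assoc, inv_mul_cancel₀ hwne, mul_one]
    exact hm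
  have ht₀TW : (t₀ : E) ∈ TW := (hTWmem _).mpr ⟨1, by simp, by rw [one_smul]; exact ht₀W⟩
  -- Urysohn bump around the orbit of t₀
  set th : ↥L₁.hat := ⟨(t₀ : E), Or.inl t₀.2⟩ with hth_def
  set Orb : Set ↥L₁.hat := Set.range (fun z : ↥(Metric.sphere (0:ℂ) 1) =>
    L₁.hsm z.1 (mem_sphere_zero_iff_norm.mp z.2) th) with hOrb_def
  have hOrbcompact : IsCompact Orb := by
    haveI : CompactSpace ↥(Metric.sphere (0:ℂ) 1) :=
      isCompact_iff_compactSpace.mp (isCompact_sphere (0:ℂ) 1)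
    apply isCompact_range
    exact Continuous.subtype_mk (continuous_subtype_val.smul continuous_const) _
  set D : Set ↥L₁.hat := (Subtype.val ⁻¹' TW)ᶜ with hD_def
  have hDclosed : IsClosed D :=
    isClosed_compl_iff.mpr (hTWopen.preimage continuous_subtype_val)
  have hdisjOD : Disjoint D Orb := by
    rw [Set.disjoint_right]
    rintro x ⟨z, rfl⟩
    simp only [hD_def, Set.mem_compl_iff, Set.mem_preimage, not_not]
    show (z : ℂ) • (t₀ : E) ∈ TW
    exact hTWsymm z.1 (mem_sphere_zero_iff_norm.mp z.2) _ ht₀TW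
  obtain ⟨gb, hgb0, hgb1, hgb01⟩ :=
    exists_continuous_zero_one_of_isClosed hDclosed hOrbcompact.isClosed hdisjOD
  obtain ⟨h, hhcont, hhinv, hhge, hhnn, hhsupp⟩ := L₁.exists_invariant gb hgb01
  have hhTW : ∀ x : ↥L₁.hat, h x ≠ 0 → (x : E) ∈ TW := by
    intro x hx
    obtain ⟨z, hz, hgz⟩ := hhsupp x hx
    have hmem : ((L₁.hsm z hz x : ↥L₁.hat) : E) ∈ TW := by
      by_contra hc
      exact hgz (hgb0 hc)
    have hzne : z ≠ 0 := by intro hc; rw [hc] at hz; simp at hz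
    have h3 := hTWsymm z⁻¹ (by rw [norm_inv, hz]; norm_num) _ hmem
    show (x : E) ∈ TW
    rwa [show ((L₁.hsm z hz x : ↥L₁.hat) : E) = z • (x : E) from rfl, smul_smul,
      inv_mul_cancel₀ hzne, one_smul] at h3
  have hthOrb : th ∈ Orb := ⟨⟨1, by simp⟩, Subtype.ext (one_smul ℂ (t₀ : E))⟩
  have hhth : h th ≠ 0 := by
    have h1 : gb th = 1 := hgb1 hthOrb
    have h2 : (1 : ℝ) ≤ h th := h1 ▸ hhge th
    intro hc; rw [hc] at h2; linarith
  -- the equivariant function a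
  set ψ : ↥L₁.hat → ℂ := fun x => ℓ (x : E) * ((h x : ℝ) : ℂ) with hψ_def
  have hψcont : Continuous ψ :=
    (hlcont.comp continuous_subtype_val).mul (Complex.continuous_ofReal.comp hhcont)
  have hψ0 : ∀ x : ↥L₁.hat, (x : E) = 0 → ψ x = 0 := by
    intro x hx
    show ℓ (x : E) * _ = 0
    rw [hx, hlzero, zero_mul]
  have hψeq : ∀ (z : ℂ) (hz : ‖z‖ = 1) (x : ↥L₁.hat), ψ (L₁.hsm z hz x) = z * ψ x := by
    intro z hz x
    show ℓ (z • (x : E)) * ((h (L₁.hsm z hz x) : ℝ) : ℂ) = z * (ℓ (x : E) * _)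
    rw [hlsmul, hhinv]
    ring
  obtain ⟨a, ha⟩ := L₁.exists_C0T ψ hψcont hψ0 hψeq
  have hψth : ψ th ≠ 0 := mul_ne_zero hlt₀ (by exact_mod_cast hhth)
  have hat₀ : (a : C₀(↥L₁.carrier, ℂ)) t₀ ≠ 0 := by
    rw [ha t₀]; exact hψth
  -- main claim: T a vanishes everywhere
  have hTa : ∀ s : L₂.carrier, ((T a : L₂.C0T) : C₀(↥L₂.carrier, ℂ)) s = 0 := by
    intro s
    set A : Set ↥L₁.hat := {x | ψ x ≠ 0} with hA_def
    set K : Set ↥L₁.hat := closure A with hK_def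
    have hKcompact : IsCompact K := isClosed_closure.isCompact
    have hKne : K.Nonempty := ⟨th, subset_closure hψth⟩
    -- K is contained in the compact set N of rotates of points of (closure W) ∩ L̂
    have hCW : IsCompact (L₁.hat ∩ closure W) := L₁.isCompact_hat.inter_right isClosed_closure
    set N : Set E := (fun p : ℂ × E => p.1 • p.2) ''
      ((Metric.sphere (0:ℂ) 1) ×ˢ (L₁.hat ∩ closure W)) with hN_def
    have hNcompact : IsCompact N := ((isCompact_sphere (0:ℂ) 1).prod hCW).image continuous_smul
    have hKN : K ⊆ Subtype.val ⁻¹' N := by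
      apply closure_minimal _ (hNcompact.isClosed.preimage continuous_subtype_val)
      intro x hx
      have hψx : ψ x ≠ 0 := hx
      have hhx : h x ≠ 0 := by
        intro hc
        apply hψx
        show ℓ (x : E) * ((h x : ℝ) : ℂ) = 0
        rw [hc]; simp
      obtain ⟨z, hz, hm⟩ := (hTWmem _).mp (hhTW x hhx)
      have hzne : z ≠ 0 := by intro hc; rw [hc] at hz; simp at hz
      refine ⟨(z⁻¹, z • (x : E)), ⟨?_, ?_, ?_⟩, ?_⟩
      · rw [mem_sphere_zero_iff_norm, norm_inv, hz]; norm_num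
      · exact L₁.hat_smul_mem z hz x.2
      · exact subset_closure hm
      · show z⁻¹ • (z • (x : E)) = (x : E)
        rw [smul_smul, inv_mul_cancel₀ hzne, one_smul]
    -- extract null neighbourhoods for every point of K
    have hKdata : ∀ x : ↥L₁.hat, x ∈ K → ∃ U VU : Set E,
        ((x : E) ∈ U ∧ TSymm U ∧ IsOpen VU ∧ U = VU ∩ L₁.hat) ∧
        ∀ b : L₁.C0T, (∀ t : L₁.carrier, (t : E) ∉ U → b.1 t = 0) → (T b).1 s = 0 := by
      intro x hx
      obtain ⟨⟨z, y⟩, hzy, hxy⟩ := hKN hx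
      obtain ⟨hzs, hyhat, hycl⟩ : z ∈ Metric.sphere (0:ℂ) 1 ∧ y ∈ L₁.hat ∧ y ∈ closure W := by
        have h1 := hzy.1
        have h2 := hzy.2
        exact ⟨h1, h2.1, h2.2⟩
      have hyV : y ∈ Vr := (hclW hycl).1
      have hyne : y ≠ 0 := (hclW hycl).2
      have hyc : y ∈ L₁.carrier := hyhat.resolve_right hyne
      have hns : (x : E) ∉ suppDelta T s := by
        intro hsupp
        have hzn : ‖z‖ = 1 := mem_sphere_zero_iff_norm.mp hzs
        have h4 : y ∈ suppDelta T s := by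
          apply suppDelta_of_smul T s hzn hyhat
          rw [show z • y = (x : E) from hxy]
          exact hsupp
        exact hdisj ⟨y, hyc⟩ hyV s h4
      have hns2 : ¬ ∀ U : Set E, (x : E) ∈ U → TSymm U →
          (∃ V : Set E, IsOpen V ∧ U = V ∩ L₁.hat) →
          ∃ b : L₁.C0T, (∀ t : L₁.carrier, (t : E) ∉ U → b.1 t = 0) ∧ (T b).1 s ≠ 0 :=
        fun hU => hns ⟨x.2, hU⟩
      push_neg at hns2
      obtain ⟨U, hxU, hUsymm, ⟨VU, hVUopen, hUeq⟩, hnull⟩ := hns2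
      exact ⟨U, VU, ⟨hxU, hUsymm, hVUopen, hUeq⟩, hnull⟩
    choose! Ux VUx hdat hnull using hKdata
    -- bumps at every point of K
    have hbump : ∀ x : ↥L₁.hat, x ∈ K → ∃ g : C(↥L₁.hat, ℝ), g x = 1 ∧
        (∀ y : ↥L₁.hat, (y : E) ∉ VUx x → g y = 0) ∧ ∀ y, g y ∈ Set.Icc (0:ℝ) 1 := by
      intro x hx
      have hxV : x ∈ Subtype.val ⁻¹' (VUx x) := by
        have h1 := (hdat x hx).1
        rw [(hdat x hx).2.2.2] at h1
        exact h1.1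
      have hclosed1 : IsClosed ((Subtype.val ⁻¹' (VUx x))ᶜ : Set ↥L₁.hat) :=
        isClosed_compl_iff.mpr ((hdat x hx).2.2.1.preimage continuous_subtype_val)
      have hdisj2 : Disjoint ((Subtype.val ⁻¹' (VUx x))ᶜ) ({x} : Set ↥L₁.hat) := by
        rw [Set.disjoint_right]
        rintro y rfl
        simp only [Set.mem_compl_iff, not_not]
        exact hxV
      obtain ⟨g, hg0, hg1, hg01⟩ :=
        exists_continuous_zero_one_of_isClosed hclosed1 isClosed_singleton hdisj2
      exact ⟨g, hg1 rfl, fun y hy => hg0 hy, hg01⟩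
    choose! gx hgx1 hgx0 hgx01 using hbump
    -- finite subcover
    have hcover : K ⊆ ⋃ i : ↥K, {y : ↥L₁.hat | 0 < gx i.1 y} := by
      intro y hy
      refine Set.mem_iUnion.mpr ⟨⟨y, hy⟩, ?_⟩
      show 0 < gx y y
      rw [hgx1 y hy]; norm_num
    obtain ⟨Fs, hFs⟩ := hKcompact.elim_finite_subcover (fun i : ↥K => {y | 0 < gx i.1 y})
      (fun i => isOpen_lt continuous_const (gx i.1).continuous) hcover
    -- invariantized bumps
    have hGex : ∀ i : ↥K, ∃ G : ↥L₁.hat → ℝ, Continuous G ∧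
        (∀ (z : ℂ) (hz : ‖z‖ = 1) (x : ↥L₁.hat), G (L₁.hsm z hz x) = G x) ∧
        (∀ y, gx i.1 y ≤ G y) ∧ (∀ y, 0 ≤ G y) ∧
        (∀ y : ↥L₁.hat, G y ≠ 0 → (y : E) ∈ Ux i.1) := by
      intro i
      obtain ⟨G, hc, hinv, hge, hnn, hsupp⟩ := L₁.exists_invariant (gx i.1) (hgx01 i.1 i.2)
      refine ⟨G, hc, hinv, hge, hnn, ?_⟩
      intro y hy
      obtain ⟨z, hz, hgz⟩ := hsupp y hy
      have hmem : ((L₁.hsm z hz y : ↥L₁.hat) : E) ∈ VUx i.1 := by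
        by_contra hc2
        exact hgz (hgx0 i.1 i.2 _ hc2)
      have hUx : (z • (y : E)) ∈ Ux i.1 := by
        rw [(hdat i.1 i.2).2.2.2]
        exact ⟨hmem, (L₁.hsm z hz y).2⟩
      have hzne : z ≠ 0 := by intro hc2; rw [hc2] at hz; simp at hz
      have h5 := (hdat i.1 i.2).2.1 z⁻¹ (by rw [norm_inv, hz]; norm_num) _ hUx
      rwa [smul_smul, inv_mul_cancel₀ hzne, one_smul] at h5
    choose G hGc hGinv hGge hGnn hGsupp using hGex
    -- sum, minimum, normalization
    set Sm : ↥L₁.hat → ℝ := fun y => ∑ i ∈ Fs, G i y with hSm_def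
    have hSmc : Continuous Sm := continuous_finset_sum _ (fun i _ => hGc i)
    have hSminv : ∀ (z : ℂ) (hz : ‖z‖ = 1) (x : ↥L₁.hat), Sm (L₁.hsm z hz x) = Sm x := by
      intro z hz x
      exact Finset.sum_congr rfl (fun i _ => hGinv i z hz x)
    have hSmpos : ∀ y ∈ K, 0 < Sm y := by
      intro y hy
      have h6 := hFs hy
      rw [Set.mem_iUnion₂] at h6
      obtain ⟨i, hiF, hyi⟩ := h6
      have h1 : 0 < gx i.1 y := hyi
      calc (0:ℝ) < G i y := lt_of_lt_of_le h1 (hGge i y)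
      _ ≤ Sm y := Finset.single_le_sum (fun j _ => hGnn j y) hiF
    obtain ⟨y₀, hy₀K, hy₀min'⟩ := hKcompact.exists_isMinOn hKne hSmc.continuousOn
    have hy₀min : ∀ y ∈ K, Sm y₀ ≤ Sm y := fun y hy => hy₀min' hy
    have hcpos : 0 < Sm y₀ := hSmpos y₀ hy₀K
    set ρ : ↥L₁.hat → ℝ := fun y => (max (Sm y) (Sm y₀ / 2))⁻¹ with hρ_def
    have hρc : Continuous ρ := (hSmc.max continuous_const).inv₀
      (fun y => ne_of_gt (lt_of_lt_of_le (by linarith) (le_max_right _ _)))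
    have hρinv : ∀ (z : ℂ) (hz : ‖z‖ = 1) (x : ↥L₁.hat), ρ (L₁.hsm z hz x) = ρ x := by
      intro z hz x
      show (max (Sm (L₁.hsm z hz x)) _)⁻¹ = _
      rw [hSminv z hz x]
    have hρK : ∀ y ∈ K, Sm y * ρ y = 1 := by
      intro y hy
      have h1 : Sm y₀ ≤ Sm y := hy₀min y hy
      show Sm y * (max (Sm y) (Sm y₀ / 2))⁻¹ = 1
      rw [max_eq_left (by linarith)]
      exact mul_inv_cancel₀ (ne_of_gt (hSmpos y hy))
    -- the pieces of a
    have hbex : ∀ i : ↥K, ∃ b : L₁.C0T, ∀ t : L₁.carrier,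
        (b : C₀(↥L₁.carrier, ℂ)) t
          = ψ ⟨↑t, Or.inl t.2⟩ * ((G i ⟨↑t, Or.inl t.2⟩ * ρ ⟨↑t, Or.inl t.2⟩ : ℝ) : ℂ) := by
      intro i
      apply L₁.exists_C0T (fun x => ψ x * ((G i x * ρ x : ℝ) : ℂ))
      · exact hψcont.mul (Complex.continuous_ofReal.comp ((hGc i).mul hρc))
      · intro x hx
        rw [hψ0 x hx, zero_mul]
      · intro z hz x
        show ψ (L₁.hsm z hz x) * ((G i (L₁.hsm z hz x) * ρ (L₁.hsm z hz x) : ℝ) : ℂ) = _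
        rw [hψeq z hz x, hGinv i z hz x, hρinv z hz x]
        ring
    choose b hb using hbex
    have hTb : ∀ i ∈ Fs, (T (b i)).1 s = 0 := by
      intro i _
      apply hnull i.1 i.2
      intro t ht
      rw [hb i t]
      have h7 : G i ⟨↑t, Or.inl t.2⟩ = 0 := by
        by_contra hc2
        exact ht (hGsupp i _ hc2)
      rw [h7]
      simp
    -- a equals the sum of the pieces
    have evt : ∀ t : L₁.carrier, ∃ ev : L₁.C0T →+ ℂ, ∀ u : L₁.C0T, ev u = u.1 t :=
      fun t => ⟨{ toFun := fun u => u.1 t, map_zero' := rfl,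
                  map_add' := fun u v => rfl }, fun u => rfl⟩
    have hsum : a = ∑ i ∈ Fs, b i := by
      apply Subtype.ext
      ext t
      obtain ⟨ev, hev⟩ := evt t
      have h8 : ((∑ i ∈ Fs, b i : L₁.C0T)).1 t = ∑ i ∈ Fs, (b i).1 t := by
        rw [← hev]
        rw [map_sum]
        exact Finset.sum_congr rfl (fun i _ => hev (b i))
      show a.1 t = ((∑ i ∈ Fs, b i : L₁.C0T)).1 t
      rw [h8]
      have h9 : ∀ i : ↥K, (b i).1 t
          = ψ ⟨↑t, Or.inl t.2⟩ * ((G i ⟨↑t, Or.inl t.2⟩ * ρ ⟨↑t, Or.inl t.2⟩ : ℝ) : ℂ) :=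
        fun i => hb i t
      rw [Finset.sum_congr rfl (fun i _ => h9 i), ← Finset.mul_sum]
      rw [ha t]
      by_cases hψt : ψ ⟨↑t, Or.inl t.2⟩ = 0
      · rw [hψt]; simp
      · have hmem : (⟨↑t, Or.inl t.2⟩ : ↥L₁.hat) ∈ K := subset_closure hψt
        have h10 : ∑ i ∈ Fs, ((G i ⟨↑t, Or.inl t.2⟩ * ρ ⟨↑t, Or.inl t.2⟩ : ℝ) : ℂ)
            = ((Sm ⟨↑t, Or.inl t.2⟩ * ρ ⟨↑t, Or.inl t.2⟩ : ℝ) : ℂ) := by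
          rw [← Complex.ofReal_sum, ← Finset.sum_mul]
        rw [h10, hρK _ hmem]
        simp
    have evs : ∃ ev : L₂.C0T →+ ℂ, ∀ u : L₂.C0T, ev u = u.1 s :=
      ⟨{ toFun := fun u => u.1 s, map_zero' := rfl,
         map_add' := fun u v => rfl }, fun u => rfl⟩
    obtain ⟨ev, hev⟩ := evs
    show (T a).1 s = 0
    rw [hsum, map_sum, ← hev, map_sum]
    rw [Finset.sum_congr rfl (fun i _ => hev (T (b i)))]
    exact Finset.sum_eq_zero hTb
  -- conclude
  have hTa0 : T a = 0 := by
    apply Subtype.ext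
    ext s
    simpa using hTa s
  have ha0 : a = 0 := hinj (by rw [hTa0, map_zero])
  apply hat₀
  rw [ha0]
  rfl

end MainStatements
end
end

section
/- Let L be a principal 𝕋-bundle, t₀ ∈ L, and let W be a 𝕋-symmetric open neighbourhood of t₀ in L which is contained in a compact 𝕋-symmetric subset of L. Then there exists a function h ∈ C₀^𝕋(L) with ‖h‖ = 1 satisfying h(t₀) = 1 and h(t) = 0 for all t ∈ L \ W. -/
open scoped ZeroAtInfty

noncomputable section

variable {E F : Type*} [AddCommGroup E] [Module ℂ E] [TopologicalSpace E]
  [AddCommGroup F] [Module ℂ F] [TopologicalSpace F]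

section MainStatements

variable [IsTopologicalAddGroup E] [ContinuousSMul ℂ E] [T2Space E]
  [Module ℝ E] [IsScalarTower ℝ ℂ E] [LocallyConvexSpace ℝ E]
  [IsTopologicalAddGroup F] [ContinuousSMul ℂ F] [T2Space F]
  [Module ℝ F] [IsScalarTower ℝ ℂ F] [LocallyConvexSpace ℝ F]

set_option maxHeartbeats 1000000 in
/-- (Urysohn-type lemma for `C₀^𝕋(L)`.) If `W` is a `𝕋`-symmetric
relatively open neighbourhood of `t₀` in `L` contained in a compact `𝕋`-symmetric
subset of `L`, then there is `h ∈ C₀^𝕋(L)` of norm one with `h(t₀) = 1` and `h ≡ 0`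
off `W`. -/
theorem exists_urysohn_equivariant (L : TBundle E) (t₀ : L.carrier) (W : Set E)
    (hWopen : ∃ V : Set E, IsOpen V ∧ W = V ∩ L.carrier)
    (hWsymm : TSymm W) (ht₀ : (t₀ : E) ∈ W)
    (hK : ∃ K : Set E, K ⊆ L.carrier ∧ IsCompact K ∧ TSymm K ∧ W ⊆ K) :
    ∃ h : L.C0T, ‖h.1‖ = 1 ∧ h.1 t₀ = 1 ∧
      ∀ t : L.carrier, (t : E) ∉ W → h.1 t = 0 := by
  classical
  obtain ⟨V, hVopen, hWV⟩ := hWopen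
  obtain ⟨K, hKL, hKc, hKsymm, hWK⟩ := hK
  haveI : ContinuousSMul ℝ E := IsScalarTower.continuousSMul ℂ
  -- a continuous linear functional equal to `1` at `t₀`
  have ht0ne : (t₀ : E) ≠ 0 := fun h => L.zero_not_mem (h ▸ t₀.2)
  obtain ⟨g, hg⟩ : ∃ g : E →L[ℝ] ℝ, g (t₀ : E) = 1 := SeparatingDual.exists_eq_one ht0ne
  set φ : E → ℂ := fun x => (g x : ℂ) - Complex.I * (g (Complex.I • x) : ℂ) with hφdef
  have hφcont : Continuous φ := by
    apply Continuous.sub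
    · exact Complex.continuous_ofReal.comp g.continuous
    · exact continuous_const.mul
        (Complex.continuous_ofReal.comp (g.continuous.comp (continuous_const_smul _)))
  have hreal : ∀ (r : ℝ) (x : E), (r : ℂ) • x = r • x := fun r x => by
    rw [show ((r : ℂ)) = algebraMap ℝ ℂ r from rfl, algebraMap_smul]
  have hsmulI : ∀ x : E, Complex.I • (Complex.I • x) = -x := fun x => by
    rw [smul_smul, Complex.I_mul_I, show ((-1 : ℂ)) = algebraMap ℝ ℂ (-1) from by norm_num,
      algebraMap_smul, neg_one_smul]
  have hφI : ∀ x, φ (Complex.I • x) = Complex.I * φ x := fun x => by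
    simp only [hφdef, hsmulI, map_neg, Complex.ofReal_neg, mul_neg, mul_sub]
    rw [← mul_assoc, Complex.I_mul_I]
    ring
  have hφreal : ∀ (r : ℝ) (x : E), φ ((r : ℂ) • x) = r * φ x := fun r x => by
    have h1 : Complex.I • (r • x) = r • (Complex.I • x) := by
      rw [← hreal, smul_smul, mul_comm, ← smul_smul, hreal]
    simp only [hφdef, hreal, h1, map_smul, smul_eq_mul]
    push_cast
    ring
  have hφadd : ∀ x y, φ (x + y) = φ x + φ y := fun x y => by
    simp only [hφdef, smul_add, map_add]
    push_cast
    ring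
  have hφsmul : ∀ (z : ℂ) (x : E), φ (z • x) = z * φ x := fun z x => by
    have hz : z • x = (z.re : ℂ) • x + (z.im : ℂ) • (Complex.I • x) := by
      rw [smul_smul, ← add_smul, Complex.re_add_im]
    have h2 : (z.re : ℂ) * φ x + (z.im : ℂ) * (Complex.I * φ x) =
        ((z.re : ℂ) + z.im * Complex.I) * φ x := by ring
    rw [hz, hφadd, hφreal, hφreal, hφI, h2, Complex.re_add_im]
  set c : ℂ := φ (t₀ : E) with hcdef
  have hcre : c.re = 1 := by
    simp [hcdef, hφdef, hg, Complex.sub_re, Complex.mul_re]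
  have hc : c ≠ 0 := fun h => by simp [h] at hcre
  -- the retraction of `ℂ` onto its unit disc
  set ret : ℂ → ℂ := fun w => w / ((max 1 ‖w‖ : ℝ) : ℂ) with hretdef
  have hmaxpos : ∀ w : ℂ, (0 : ℝ) < max 1 ‖w‖ := fun w =>
    lt_of_lt_of_le one_pos (le_max_left _ _)
  have hretcont : Continuous ret := by
    apply Continuous.div continuous_id
    · exact Complex.continuous_ofReal.comp (continuous_const.max continuous_norm)
    · intro w
      simp only [ne_eq, Complex.ofReal_eq_zero]
      exact ne_of_gt (hmaxpos w)
  have hretnorm : ∀ w, ‖ret w‖ ≤ 1 := fun w => by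
    rw [hretdef]
    simp only [norm_div, Complex.norm_real, Real.norm_eq_abs]
    rw [abs_of_pos (hmaxpos w)]
    exact (div_le_one (hmaxpos w)).mpr (le_max_right _ _)
  have hret1 : ret 1 = 1 := by simp [hretdef]
  have hretmul : ∀ (z w : ℂ), ‖z‖ = 1 → ret (z * w) = z * ret w := fun z w hz => by
    simp only [hretdef, norm_mul, hz, one_mul, mul_div_assoc]
  -- Urysohn function on the compact space `L̂`
  haveI : CompactSpace ↥L.hat := isCompact_iff_compactSpace.mp L.isCompact_union
  have hWopen' : IsOpen {x : ↥L.hat | (x : E) ∈ W} := by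
    have hiff : {x : ↥L.hat | (x : E) ∈ W} = Subtype.val ⁻¹' (V \ {0}) := by
      ext x
      simp only [Set.mem_setOf_eq, Set.mem_preimage, Set.mem_diff, Set.mem_singleton_iff]
      constructor
      · intro hx
        rw [hWV] at hx
        exact ⟨hx.1, fun h0 => L.zero_not_mem (h0 ▸ hx.2)⟩
      · rintro ⟨hxV, hx0⟩
        rw [hWV]
        refine ⟨hxV, ?_⟩
        rcases x.2 with h | h
        · exact h
        · exact absurd h hx0
    rw [hiff]
    exact (hVopen.sdiff isClosed_singleton).preimage continuous_subtype_val
  have ht₀hat : (t₀ : E) ∈ L.hat := Or.inl t₀.2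
  set q : Metric.sphere (0 : ℂ) 1 → ↥L.hat := fun z =>
    ⟨(z : ℂ) • (t₀ : E),
      Or.inl (L.smul_mem _ (mem_sphere_zero_iff_norm.mp z.2) _ t₀.2)⟩ with hqdef
  have hqcont : Continuous q :=
    Continuous.subtype_mk (continuous_subtype_val.smul continuous_const) _
  have hBclosed : IsClosed (Set.range q) := (isCompact_range hqcont).isClosed
  have hscl : IsClosed {x : ↥L.hat | (x : E) ∉ W} := by
    have : {x : ↥L.hat | (x : E) ∉ W} = {x : ↥L.hat | (x : E) ∈ W}ᶜ := rfl
    rw [this]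
    exact hWopen'.isClosed_compl
  have hdisj : Disjoint {x : ↥L.hat | (x : E) ∉ W} (Set.range q) := by
    rw [Set.disjoint_right]
    rintro x ⟨z, rfl⟩ hx
    exact hx (hWsymm _ (mem_sphere_zero_iff_norm.mp z.2) _ ht₀)
  obtain ⟨f, hf0, hf1, hf01⟩ := exists_continuous_zero_one_of_isClosed hscl hBclosed hdisj
  -- circle parametrisation
  set e : ℝ → ℂ := fun θ => Complex.exp (θ * Complex.I) with hedef
  have he1 : ∀ θ, ‖e θ‖ = 1 := fun θ => by
    rw [hedef]
    simp [Complex.norm_exp_ofReal_mul_I]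
  have hecont : Continuous e :=
    Complex.continuous_exp.comp (Complex.continuous_ofReal.mul continuous_const)
  have headd : ∀ a b : ℝ, e (a + b) = e a * e b := fun a b => by
    rw [hedef]
    push_cast
    rw [add_mul, Complex.exp_add]
  have hπ : (0 : ℝ) < 2 * Real.pi := by positivity
  have heper : ∀ θ, e (θ + 2 * Real.pi) = e θ := fun θ => by
    have h2 : e (2 * Real.pi) = 1 := by
      rw [hedef]
      push_cast
      exact Complex.exp_two_pi_mul_I
    rw [headd, h2, mul_one]
  -- the averaged Urysohn function
  set F : ↥L.hat → ℝ → ℝ := fun x θ => f (L.hsm (e θ) (he1 θ) x) with hFdef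
  have hmcont : Continuous fun p : ↥L.hat × ℝ => L.hsm (e p.2) (he1 p.2) p.1 :=
    Continuous.subtype_mk
      ((hecont.comp continuous_snd).smul (continuous_subtype_val.comp continuous_fst)) _
  have hFcont : Continuous (Function.uncurry F) := f.continuous.comp hmcont
  have hFc : ∀ x, Continuous (F x) := fun x =>
    f.continuous.comp (Continuous.subtype_mk (hecont.smul continuous_const) _)
  have hFint : ∀ x a b, IntervalIntegrable (F x) MeasureTheory.volume a b := fun x a b =>
    (hFc x).intervalIntegrable a b
  set ψ : ↥L.hat → ℝ := fun x => (2 * Real.pi)⁻¹ * ∫ θ in (0 : ℝ)..(2 * Real.pi), F x θ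
    with hψdef
  have hψcont : Continuous ψ :=
    continuous_const.mul
      (intervalIntegral.continuous_parametric_intervalIntegral_of_continuous' hFcont 0
        (2 * Real.pi))
  have hψmem : ∀ x, ψ x ∈ Set.Icc (0 : ℝ) 1 := fun x => by
    constructor
    · apply mul_nonneg (by positivity)
      apply intervalIntegral.integral_nonneg hπ.le
      intro θ _
      exact (hf01 _).1
    · show (2 * Real.pi)⁻¹ * ∫ θ in (0 : ℝ)..(2 * Real.pi), F x θ ≤ 1
      have h2 : (∫ θ in (0 : ℝ)..(2 * Real.pi), F x θ) ≤
          ∫ _ in (0 : ℝ)..(2 * Real.pi), (1 : ℝ) := by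
        apply intervalIntegral.integral_mono_on hπ.le (hFint x 0 _) intervalIntegrable_const
        intro θ _
        exact (hf01 _).2
      rw [intervalIntegral.integral_const, smul_eq_mul, mul_one, sub_zero] at h2
      calc (2 * Real.pi)⁻¹ * ∫ θ in (0 : ℝ)..(2 * Real.pi), F x θ
          ≤ (2 * Real.pi)⁻¹ * (2 * Real.pi) := by
            exact mul_le_mul_of_nonneg_left h2 (by positivity)
        _ = 1 := inv_mul_cancel₀ (ne_of_gt hπ)
  have hψt₀ : ψ ⟨(t₀ : E), ht₀hat⟩ = 1 := by
    have hFone : ∀ θ, F ⟨(t₀ : E), ht₀hat⟩ θ = 1 := fun θ => by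
      apply hf1
      exact ⟨⟨e θ, by simpa [mem_sphere_zero_iff_norm] using he1 θ⟩, Subtype.ext rfl⟩
    show (2 * Real.pi)⁻¹ * ∫ θ in (0 : ℝ)..(2 * Real.pi), F ⟨(t₀ : E), ht₀hat⟩ θ = 1
    rw [intervalIntegral.integral_congr (g := fun _ => (1 : ℝ)) fun θ _ => hFone θ]
    rw [intervalIntegral.integral_const, smul_eq_mul, mul_one, sub_zero]
    exact inv_mul_cancel₀ (ne_of_gt hπ)
  have hψ0 : ∀ x : ↥L.hat, (x : E) ∉ W → ψ x = 0 := fun x hx => by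
    have hFzero : ∀ θ, F x θ = 0 := fun θ => by
      apply hf0
      show (e θ) • (x : E) ∉ W
      intro hmem
      apply hx
      have hne : e θ ≠ 0 := by
        intro h0
        have h1 := he1 θ
        rw [h0, norm_zero] at h1
        exact zero_ne_one h1
      have hw := hWsymm (e θ)⁻¹ (by rw [norm_inv, he1, inv_one]) _ hmem
      rwa [smul_smul, inv_mul_cancel₀ hne, one_smul] at hw
    show (2 * Real.pi)⁻¹ * ∫ θ in (0 : ℝ)..(2 * Real.pi), F x θ = 0
    rw [intervalIntegral.integral_congr (g := fun _ => (0 : ℝ)) fun θ _ => hFzero θ]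
    simp
  have hψequiv : ∀ (z : ℂ) (hz : ‖z‖ = 1) (x : ↥L.hat), ψ (L.hsm z hz x) = ψ x := by
    intro z hz x
    set α := z.arg with hα
    have hze : z = e α := by
      have h1 := Complex.norm_mul_exp_arg_mul_I z
      rw [hz, ← hα] at h1
      rw [hedef, ← h1]
      simp
    have hFs : ∀ θ, F (L.hsm z hz x) θ = F x (θ + α) := fun θ => by
      show f _ = f _
      congr 1
      apply Subtype.ext
      show e θ • (z • (x : E)) = e (θ + α) • (x : E)
      rw [headd, smul_smul, hze]
    have hper : Function.Periodic (F x) (2 * Real.pi) := fun θ => by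
      show f _ = f _
      congr 1
      apply Subtype.ext
      show e (θ + 2 * Real.pi) • (x : E) = e θ • (x : E)
      rw [heper]
    show (2 * Real.pi)⁻¹ * ∫ θ in (0 : ℝ)..(2 * Real.pi), F (L.hsm z hz x) θ =
      (2 * Real.pi)⁻¹ * ∫ θ in (0 : ℝ)..(2 * Real.pi), F x θ
    congr 1
    rw [intervalIntegral.integral_congr (g := fun θ => F x (θ + α)) fun θ _ => hFs θ]
    rw [intervalIntegral.integral_comp_add_right (f := F x) α]
    have h3 := hper.intervalIntegral_add_eq α 0
    simpa [add_comm] using h3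
  -- assemble the function
  set h0 : L.carrier → ℂ := fun t =>
    ret (φ (t : E) / c) * ((ψ ⟨(t : E), Or.inl t.2⟩ : ℝ) : ℂ) with hh0def
  have hc0 : Continuous h0 := by
    apply Continuous.mul
    · exact hretcont.comp ((hφcont.comp continuous_subtype_val).div_const c)
    · exact Complex.continuous_ofReal.comp
        (hψcont.comp (Continuous.subtype_mk continuous_subtype_val _))
  have h0off : ∀ t : L.carrier, (t : E) ∉ W → h0 t = 0 := fun t ht => by
    show ret (φ (t : E) / c) * ((ψ ⟨(t : E), Or.inl t.2⟩ : ℝ) : ℂ) = 0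
    rw [hψ0 _ ht]
    simp
  haveI : CompactSpace ↥K := isCompact_iff_compactSpace.mp hKc
  have hcs : HasCompactSupport h0 := by
    apply HasCompactSupport.intro
      (isCompact_range (f := fun k : ↥K => (⟨(k : E), hKL k.2⟩ : L.carrier))
        (Continuous.subtype_mk continuous_subtype_val _))
    intro t ht
    apply h0off
    intro hW
    exact ht ⟨⟨(t : E), hWK hW⟩, Subtype.ext rfl⟩
  set h : C₀(↥L.carrier, ℂ) :=
    { toFun := h0, continuous_toFun := hc0, zero_at_infty' := hcs.is_zero_at_infty } with hhdef
  have hmem : h ∈ L.C0T := by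
    intro z hz t
    show h0 (L.sm z hz t) = z * h0 t
    show ret (φ (z • (t : E)) / c) * ((ψ ⟨z • (t : E), _⟩ : ℝ) : ℂ) =
      z * (ret (φ (t : E) / c) * ((ψ ⟨(t : E), Or.inl t.2⟩ : ℝ) : ℂ))
    rw [hφsmul, mul_div_assoc, hretmul z _ hz]
    have h2 : ψ ⟨z • (t : E), Or.inl (L.sm z hz t).2⟩ = ψ ⟨(t : E), Or.inl t.2⟩ :=
      hψequiv z hz ⟨(t : E), Or.inl t.2⟩
    rw [h2]
    ring
  have hht₀ : h t₀ = 1 := by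
    show ret (φ (t₀ : E) / c) * ((ψ ⟨(t₀ : E), Or.inl t₀.2⟩ : ℝ) : ℂ) = 1
    rw [← hcdef, div_self hc, hret1, hψt₀]
    simp
  have hnorm : ‖h‖ = 1 := by
    apply le_antisymm
    · rw [← ZeroAtInftyContinuousMap.norm_toBCF_eq_norm]
      rw [BoundedContinuousFunction.norm_le zero_le_one]
      intro t
      show ‖h0 t‖ ≤ 1
      rw [norm_mul]
      have h1 : ‖ret (φ (t : E) / c)‖ ≤ 1 := by
        exact hretnorm _
      have h2 : ‖((ψ ⟨(t : E), Or.inl t.2⟩ : ℝ) : ℂ)‖ ≤ 1 := by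
        rw [Complex.norm_real, Real.norm_eq_abs, abs_le]
        obtain ⟨ha, hb⟩ := hψmem ⟨(t : E), Or.inl t.2⟩
        constructor <;> linarith
      calc ‖ret (φ (t : E) / c)‖ * ‖((ψ ⟨(t : E), Or.inl t.2⟩ : ℝ) : ℂ)‖
          ≤ 1 * 1 := mul_le_mul h1 h2 (norm_nonneg _) zero_le_one
        _ = 1 := one_mul 1
    · have hle := BoundedContinuousFunction.norm_coe_le_norm h.toBCF t₀
      rw [ZeroAtInftyContinuousMap.norm_toBCF_eq_norm] at hle
      have : h.toBCF t₀ = h t₀ := rfl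
      rw [this, hht₀] at hle
      simpa using hle
  exact ⟨⟨h, hmem⟩, hnorm, hht₀, fun t ht => h0off t ht⟩

end MainStatements
end
end
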